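/- Let G = (V,E) be a finite connected simple graph with maximum degree at most d (where d ≥ 2) and tree-length at most t, and let s ∈ V. In the layering graph H of G with respect to s, rooted at the class {s}, every node has at most d^{3t+2} − 1 children; that is, every layering class of layer i is adjacent in H to at most d^{3t+2} − 1 layering classes of layer i+1. -/

import Mathlib

open SimpleGraph

/-- A tree decomposition of a graph `G`, with decomposition tree indexed by `ι`. -/
structure TreeDecomp {V : Type} (G : SimpleGraph V) (ι : Type) : Type where
  /-- the decomposition tree -/
  tree : SimpleGraph ι
  /-- the decomposition tree is a tree -/
  isTree : tree.IsTree
  /-- the bags -/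
  bag : ι → Set V
  /-- every vertex of `G` belongs to some bag -/
  bag_cover : ∀ v : V, ∃ t, v ∈ bag t
  /-- both endpoints of every edge of `G` lie in a common bag -/
  bag_edge : ∀ ⦃u v : V⦄, G.Adj u v → ∃ t, u ∈ bag t ∧ v ∈ bag t
  /-- the nodes whose bag contains a given vertex induce a connected subtree -/
  bag_conn : ∀ v : V, (tree.induce {t | v ∈ bag t}).Connected

/-- `G` has a tree decomposition all of whose bags have diameter at most `ℓ` in `G`. -/
def HasTDLength {V : Type} (G : SimpleGraph V) (ℓ : ℕ) : Prop :=
  ∃ (ι : Type) (td : TreeDecomp G ι), ∀ t, ∀ u ∈ td.bag t, ∀ v ∈ td.bag t, G.dist u v ≤ ℓ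

/-- The tree-length of `G`: the minimum length over all tree decompositions of `G`. -/
noncomputable def treeLength {V : Type} (G : SimpleGraph V) : ℕ :=
  sInf {ℓ | HasTDLength G ℓ}

/-- `u` and `v` are layering-equivalent w.r.t. source `s`: they lie at the same
distance `i` from `s` and are joined by a path all of whose (intermediate)
vertices are at distance at least `i` from `s`. -/
def LayerEquiv {V : Type} (G : SimpleGraph V) (s u v : V) : Prop :=
  G.dist s u = G.dist s v ∧
    ∃ p : G.Walk u v, p.IsPath ∧ ∀ w ∈ p.support, G.dist s u ≤ G.dist s w

/-- The layering class of the vertex `v` w.r.t. source `s`. -/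
def layeringClassOf {V : Type} (G : SimpleGraph V) (s v : V) : Set V :=
  {u | LayerEquiv G s v u}

/-- `C` is a layering class of `G` w.r.t. source `s`. -/
def IsLayeringClass {V : Type} (G : SimpleGraph V) (s : V) (C : Set V) : Prop :=
  ∃ v, C = layeringClassOf G s v

/-- The layering graph `H`: vertices are the layering classes, two distinct
classes being adjacent iff `G` has an edge with one endpoint in each. -/
def layeringGraph {V : Type} (G : SimpleGraph V) (s : V) :
    SimpleGraph {C : Set V // IsLayeringClass G s C} where
  Adj C D := C ≠ D ∧ ∃ u ∈ C.1, ∃ w ∈ D.1, G.Adj u w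
  symm := by
    constructor
    rintro C D ⟨hne, u, hu, w, hw, h⟩
    exact ⟨hne.symm, w, hw, u, hu, h.symm⟩
  loopless := by constructor; rintro C ⟨hne, -⟩; exact hne rfl


section Aux

variable {V : Type} {G : SimpleGraph V}

/-- median-type walk lemma: given paths `a→b` and `b→c` there is a vertex `m` on
both and on some path `a→c` whose support is covered by the two given paths. -/
lemma aux_median {ι : Type} {T : SimpleGraph ι} {a b c : ι}
    (q : T.Walk a b) (hq : q.IsPath) (p : T.Walk b c) (hp : p.IsPath) :
    ∃ m, m ∈ q.support ∧ m ∈ p.support ∧ ∃ r : T.Walk a c, r.IsPath ∧ m ∈ r.support ∧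
      ∀ x ∈ r.support, x ∈ q.support ∨ x ∈ p.support := by
  classical
  induction q with
  | nil =>
    exact ⟨_, by simp, p.start_mem_support, p, hp, p.start_mem_support,
      fun x hx => Or.inr hx⟩
  | @cons a a' b h q' ih =>
    rw [SimpleGraph.Walk.cons_isPath_iff] at hq
    by_cases ha : a ∈ p.support
    · refine ⟨a, SimpleGraph.Walk.start_mem_support _, ha, p.dropUntil a ha, hp.dropUntil ha,
        (p.dropUntil a ha).start_mem_support, fun x hx => Or.inr (p.support_dropUntil_subset ha hx)⟩
    · obtain ⟨m, hmq, hmp, r', hr', hmr', hcov⟩ := ih hq.1 p hp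
      have haR : a ∉ r'.support := fun hx => (hcov a hx).elim hq.2 ha
      refine ⟨m, ?_, hmp, SimpleGraph.Walk.cons h r', hr'.cons haR, ?_, ?_⟩
      · rw [SimpleGraph.Walk.support_cons]; exact List.mem_cons_of_mem _ hmq
      · rw [SimpleGraph.Walk.support_cons]; exact List.mem_cons_of_mem _ hmr'
      · intro x hx
        rw [SimpleGraph.Walk.support_cons, List.mem_cons] at hx
        rcases hx with rfl | hx
        · exact Or.inl (SimpleGraph.Walk.start_mem_support _)
        · rcases hcov x hx with h1 | h1
          · exact Or.inl (by rw [SimpleGraph.Walk.support_cons]; exact List.mem_cons_of_mem _ h1)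
          · exact Or.inr h1

/-- walk with support in `S` from connectivity of the induced subgraph -/
lemma aux_walk_in_set {ι : Type} (T : SimpleGraph ι) (S : Set ι)
    (hc : (T.induce S).Connected) {n n' : ι} (hn : n ∈ S) (hn' : n' ∈ S) :
    ∃ w : T.Walk n n', ∀ x ∈ w.support, x ∈ S := by
  obtain ⟨w⟩ := hc ⟨n, hn⟩ ⟨n', hn'⟩
  refine ⟨w.map (SimpleGraph.Embedding.induce S).toHom, ?_⟩
  intro x hx
  replace hx : x ∈ (w.map (SimpleGraph.Embedding.induce S).toHom).support := hx
  rw [SimpleGraph.Walk.support_map] at hx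
  obtain ⟨⟨y, hy⟩, _, rfl⟩ := List.mem_map.mp hx
  exact hy

/-- splitting a shortest walk at an intermediate vertex -/
lemma aux_dist_split {s u y : V} (p : G.Walk s u) (hp : p.length = G.dist s u)
    (hy : y ∈ p.support) : G.dist s y + G.dist y u = G.dist s u := by
  classical
  have h1 : G.dist s y ≤ (p.takeUntil y hy).length := SimpleGraph.dist_le _
  have h2 : G.dist y u ≤ (p.dropUntil y hy).length := SimpleGraph.dist_le _
  have h3 : (p.takeUntil y hy).length + (p.dropUntil y hy).length = p.length := by
    rw [← SimpleGraph.Walk.length_append, SimpleGraph.Walk.take_spec]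
  have h4 : G.dist s u ≤ G.dist s y + G.dist y u := by
    obtain ⟨q1, hq1⟩ := SimpleGraph.Reachable.exists_walk_length_eq_dist ⟨p.takeUntil y hy⟩
    obtain ⟨q2, hq2⟩ := SimpleGraph.Reachable.exists_walk_length_eq_dist ⟨p.dropUntil y hy⟩
    calc G.dist s u ≤ (q1.append q2).length := SimpleGraph.dist_le _
      _ = G.dist s y + G.dist y u := by rw [SimpleGraph.Walk.length_append, hq1, hq2]
  omega

/-- uniqueness of paths in a tree -/
lemma aux_tree_path_unique {ι : Type} {T : SimpleGraph ι} (hT : T.IsTree) {a b : ι}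
    (p q : T.Walk a b) (hp : p.IsPath) (hq : q.IsPath) : p = q := by
  obtain ⟨r, -, hr⟩ := hT.existsUnique_path a b
  rw [hr p hp, hr q hq]

/-- the separator property of tree decompositions: a bag on the tree-path
between a bag containing `u` and a bag containing `v` meets every `u`–`v` walk. -/
lemma aux_separator {ι : Type} (td : TreeDecomp G ι) {a b m : ι}
    {π : td.tree.Walk a b} (hπ : π.IsPath) (hm : m ∈ π.support)
    {u v : V} (hu : u ∈ td.bag a) (hv : v ∈ td.bag b) (W : G.Walk u v) :
    ∃ x ∈ W.support, x ∈ td.bag m := by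
  classical
  by_contra hx
  push_neg at hx
  -- claim A: two bags sharing a vertex avoiding bag m are connected avoiding m
  have claimA : ∀ (x : V) (n n' : ι), x ∉ td.bag m → x ∈ td.bag n → x ∈ td.bag n' →
      ∃ w : td.tree.Walk n n', m ∉ w.support := by
    intro x n n' hxm hn hn'
    obtain ⟨w, hw⟩ := aux_walk_in_set td.tree {k | x ∈ td.bag k} (td.bag_conn x) hn hn'
    exact ⟨w, fun hmem => hxm (hw m hmem)⟩
  -- claim B: along a walk avoiding bag m, bags stay connected avoiding m
  have claimB : ∀ {u' v' : V} (W' : G.Walk u' v'), (∀ x ∈ W'.support, x ∉ td.bag m) →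
      ∀ n n', u' ∈ td.bag n → v' ∈ td.bag n' → ∃ w : td.tree.Walk n n', m ∉ w.support := by
    intro u' v' W'
    induction W' with
    | nil =>
      intro hW n n' hn hn'
      exact claimA _ n n' (hW _ (SimpleGraph.Walk.start_mem_support _)) hn hn'
    | @cons u' u'' v' h W' ih =>
      intro hW n n' hn hn'
      obtain ⟨k, hk1, hk2⟩ := td.bag_edge h
      obtain ⟨w1, hw1⟩ := claimA u' n k (hW _ (SimpleGraph.Walk.start_mem_support _)) hn hk1
      obtain ⟨w2, hw2⟩ := ih (fun x hxs => hW x (by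
        rw [SimpleGraph.Walk.support_cons]; exact List.mem_cons_of_mem _ hxs)) k n' hk2 hn'
      refine ⟨w1.append w2, ?_⟩
      rw [SimpleGraph.Walk.mem_support_append_iff]
      exact fun hc => hc.elim hw1 hw2
  obtain ⟨w, hw⟩ := claimB W hx a b hu hv
  have heq : (w.toPath : td.tree.Walk a b) = π :=
    aux_tree_path_unique td.isTree _ π (w.toPath).2 hπ
  have : m ∈ (w.toPath : td.tree.Walk a b).support := heq.symm ▸ hm
  exact hw (SimpleGraph.Walk.support_toPath_subset w this)

/-- the key geometric lemma: two vertices of the same layer joined by a path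
staying in layers `≥ i` are at distance at most `3ℓ`, where `ℓ` bounds the bag
diameters of a tree decomposition. -/
lemma aux_cluster_diam (hG : G.Connected) {ι : Type} (td : TreeDecomp G ι) {ℓ : ℕ}
    (hlen : ∀ n, ∀ x ∈ td.bag n, ∀ y ∈ td.bag n, G.dist x y ≤ ℓ)
    {s u v : V} (hd : G.dist s u = G.dist s v)
    (P : G.Walk u v) (hP : ∀ w ∈ P.support, G.dist s u ≤ G.dist s w) :
    G.dist u v ≤ 3 * ℓ := by
  obtain ⟨a, ha⟩ := td.bag_cover s
  obtain ⟨b, hb⟩ := td.bag_cover u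
  obtain ⟨c, hc⟩ := td.bag_cover v
  -- tree paths
  obtain ⟨qab, hqab, -⟩ := td.isTree.existsUnique_path a b
  obtain ⟨pbc, hpbc, -⟩ := td.isTree.existsUnique_path b c
  obtain ⟨m, hm_ab, hm_bc, r, hr, hm_ac, -⟩ := aux_median qab hqab pbc hpbc
  -- shortest paths in G
  obtain ⟨Q, hQ⟩ := hG.exists_walk_length_eq_dist s u
  obtain ⟨R, hR⟩ := hG.exists_walk_length_eq_dist s v
  -- bag m meets Q, R, P
  obtain ⟨y, hyQ, hym⟩ := aux_separator td hqab hm_ab ha hb Q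
  obtain ⟨z, hzR, hzm⟩ := aux_separator td hr hm_ac ha hc R
  obtain ⟨x, hxP, hxm⟩ := aux_separator td hpbc hm_bc hb hc P
  -- arithmetic
  have hy : G.dist s y + G.dist y u = G.dist s u := aux_dist_split Q hQ hyQ
  have hz : G.dist s z + G.dist z v = G.dist s v := aux_dist_split R hR hzR
  have hx : G.dist s u ≤ G.dist s x := hP x hxP
  have hxy : G.dist x y ≤ ℓ := hlen m x hxm y hym
  have hxz : G.dist x z ≤ ℓ := hlen m x hxm z hzm
  have hyz : G.dist y z ≤ ℓ := hlen m y hym z hzm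
  have t1 : G.dist s x ≤ G.dist s y + G.dist y x := hG.dist_triangle
  have t2 : G.dist s x ≤ G.dist s z + G.dist z x := hG.dist_triangle
  have e1 : G.dist y x = G.dist x y := SimpleGraph.dist_comm
  have e2 : G.dist z x = G.dist x z := SimpleGraph.dist_comm
  have t3 : G.dist u v ≤ G.dist u y + (G.dist y z + G.dist z v) :=
    le_trans hG.dist_triangle (by gcongr; exact hG.dist_triangle)
  have e3 : G.dist u y = G.dist y u := SimpleGraph.dist_comm
  omega

/-- `LayerEquiv` is symmetric -/
lemma aux_layerEquiv_symm {s u v : V} (h : LayerEquiv G s u v) : LayerEquiv G s v u := by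
  obtain ⟨hd, p, hp, hsup⟩ := h
  refine ⟨hd.symm, p.reverse, hp.reverse, fun w hw => ?_⟩
  rw [SimpleGraph.Walk.support_reverse, List.mem_reverse] at hw
  rw [← hd]; exact hsup w hw

/-- `LayerEquiv` is reflexive -/
lemma aux_layerEquiv_refl (s v : V) : LayerEquiv G s v v :=
  ⟨rfl, SimpleGraph.Walk.nil, SimpleGraph.Walk.IsPath.nil, by simp⟩

/-- `LayerEquiv` is transitive -/
lemma aux_layerEquiv_trans {s u v w : V} (h1 : LayerEquiv G s u v)
    (h2 : LayerEquiv G s v w) : LayerEquiv G s u w := by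
  classical
  obtain ⟨hd1, p1, hp1, hs1⟩ := h1
  obtain ⟨hd2, p2, hp2, hs2⟩ := h2
  refine ⟨hd1.trans hd2, ((p1.append p2).toPath : G.Walk u w), (p1.append p2).toPath.2,
    fun x hx => ?_⟩
  have hx' := SimpleGraph.Walk.support_toPath_subset _ hx
  rw [SimpleGraph.Walk.mem_support_append_iff] at hx'
  rcases hx' with h | h
  · exact hs1 x h
  · rw [hd1]; exact hs2 x h

/-- layering classes containing a common vertex coincide -/
lemma aux_class_eq {s v w : V} (h : w ∈ layeringClassOf G s v) :
    layeringClassOf G s v = layeringClassOf G s w := by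
  ext x
  exact ⟨fun hx => aux_layerEquiv_trans (aux_layerEquiv_symm h) hx,
    fun hx => aux_layerEquiv_trans h hx⟩

end Aux

section BallCount

variable {V : Type} [Fintype V] (G : SimpleGraph V)

open Finset in
/-- ball size bound in a graph of max degree `≤ d` -/
lemma aux_ball_card (hG : G.Connected) {d : ℕ} (hd : 2 ≤ d)
    (hdeg : ∀ v : V, (G.neighborSet v).ncard ≤ d) (u0 : V) (r : ℕ) :
    (Finset.univ.filter (fun v => G.dist u0 v ≤ r)).card ≤ d ^ (r + 1) - 1 := by
  classical
  -- sphere bound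
  have sphere_bound : ∀ j : ℕ,
      (Finset.univ.filter (fun v => G.dist u0 v = j)).card ≤ d ^ j := by
    intro j
    induction j with
    | zero =>
      have : (Finset.univ.filter (fun v => G.dist u0 v = 0)) ⊆ {u0} := by
        intro v hv
        simp only [Finset.mem_filter, Finset.mem_univ, true_and] at hv
        simp [((hG u0 v).dist_eq_zero_iff.mp hv).symm]
      simpa using Finset.card_le_card this
    | succ j ih =>
      have hsub : (Finset.univ.filter (fun v => G.dist u0 v = j + 1)) ⊆
          (Finset.univ.filter (fun v => G.dist u0 v = j)).biUnion
            (fun w => G.neighborFinset w) := by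
        intro v hv
        simp only [Finset.mem_filter, Finset.mem_univ, true_and] at hv
        obtain ⟨q, hq⟩ := hG.exists_walk_length_eq_dist v u0
        have hqlen : q.length = j + 1 := by
          rw [hq, SimpleGraph.dist_comm, hv]
        cases q with
        | nil => simp at hqlen
        | cons h q' =>
          rename_i w
          have hw1 : G.dist u0 w ≤ j := by
            have := SimpleGraph.dist_le q'.reverse
            rw [SimpleGraph.Walk.length_reverse] at this
            simp only [SimpleGraph.Walk.length_cons] at hqlen
            omega
          have hw2 : G.dist u0 v ≤ G.dist u0 w + 1 := by
            have htr : G.dist u0 v ≤ G.dist u0 w + G.dist w v := hG.dist_triangle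
            have : G.dist w v ≤ 1 := by
              have := SimpleGraph.dist_le (SimpleGraph.Walk.cons h.symm SimpleGraph.Walk.nil)
              simpa using this
            omega
          have hwj : G.dist u0 w = j := by omega
          rw [Finset.mem_biUnion]
          exact ⟨w, by simp [hwj], by simp [h.symm]⟩
      calc (Finset.univ.filter (fun v => G.dist u0 v = j + 1)).card
          ≤ ((Finset.univ.filter (fun v => G.dist u0 v = j)).biUnion
              (fun w => G.neighborFinset w)).card := Finset.card_le_card hsub
        _ ≤ ∑ w ∈ Finset.univ.filter (fun v => G.dist u0 v = j),
            (G.neighborFinset w).card := Finset.card_biUnion_le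
        _ ≤ ∑ _w ∈ Finset.univ.filter (fun v => G.dist u0 v = j), d := by
            refine Finset.sum_le_sum fun w _ => ?_
            have : (G.neighborFinset w).card = (G.neighborSet w).ncard := by
              rw [SimpleGraph.neighborFinset_def, Set.ncard_eq_toFinset_card']
            rw [this]; exact hdeg w
        _ = (Finset.univ.filter (fun v => G.dist u0 v = j)).card * d := by
            rw [Finset.sum_const, smul_eq_mul]
        _ ≤ d ^ j * d := Nat.mul_le_mul_right d ih
        _ = d ^ (j + 1) := by ring
  -- ball bound
  induction r with
  | zero =>
    have : (Finset.univ.filter (fun v => G.dist u0 v ≤ 0)) ⊆ {u0} := by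
      intro v hv
      simp only [Finset.mem_filter, Finset.mem_univ, true_and, Nat.le_zero] at hv
      simp [((hG u0 v).dist_eq_zero_iff.mp hv).symm]
    have h1 := Finset.card_le_card this
    simp only [Finset.card_singleton] at h1
    have h2 : d ^ (0 + 1) = d := by ring
    omega
  | succ r ih =>
    have hsub : (Finset.univ.filter (fun v => G.dist u0 v ≤ r + 1)) ⊆
        (Finset.univ.filter (fun v => G.dist u0 v ≤ r)) ∪
          (Finset.univ.filter (fun v => G.dist u0 v = r + 1)) := by
      intro v hv
      simp only [Finset.mem_filter, Finset.mem_univ, true_and, Finset.mem_union] at hv ⊢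
      omega
    have h1 := Finset.card_le_card hsub
    have h2 := Finset.card_union_le (Finset.univ.filter (fun v => G.dist u0 v ≤ r))
      (Finset.univ.filter (fun v => G.dist u0 v = r + 1))
    have h3 := sphere_bound (r + 1)
    have h4 : d ^ (r + 1) + d ^ (r + 1) ≤ d ^ (r + 1 + 1) := by
      have heq : d ^ (r + 1 + 1) = d ^ (r + 1) * d := by ring
      rw [heq]
      calc d ^ (r + 1) + d ^ (r + 1) = d ^ (r + 1) * 2 := by ring
        _ ≤ d ^ (r + 1) * d := Nat.mul_le_mul_left _ hd
    have h5 : 1 ≤ d ^ (r + 1) := Nat.one_le_pow _ _ (by omega)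
    omega

end BallCount

/-- the trivial one-bag tree decomposition shows `HasTDLength` is nonempty -/
lemma aux_hasTDLength {V : Type} [Fintype V] (G : SimpleGraph V) (hG : G.Connected) :
    HasTDLength G (Fintype.card V) := by
  refine ⟨Unit, ⟨⊥, ⟨?_, SimpleGraph.isAcyclic_bot⟩, fun _ => Set.univ,
    fun v => ⟨(), Set.mem_univ v⟩, fun u v _ => ⟨(), Set.mem_univ u, Set.mem_univ v⟩,
    fun v => ?_⟩, fun _ u _ v _ => ?_⟩
  · rw [SimpleGraph.connected_iff]
    exact ⟨fun a b => by rw [Subsingleton.elim a b], ⟨()⟩⟩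
  · rw [SimpleGraph.connected_iff]
    refine ⟨fun a b => ?_, ⟨⟨(), Set.mem_univ _⟩⟩⟩
    have : a = b := Subtype.ext (Subsingleton.elim _ _)
    rw [this]
  · obtain ⟨p, hp, hlen⟩ := hG.exists_path_of_dist u v
    rw [← hlen]
    exact le_of_lt hp.length_lt

/-- Let `G` be a finite connected simple graph with maximum degree
at most `d` (where `d ≥ 2`) and tree-length at most `t`. In the layering graph `H`
rooted at the class `{s}`, every node has at most `d^(3t+2) − 1` children: every
layering class of layer `i` is adjacent in `H` to at most `d^(3t+2) − 1` layering
classes of layer `i + 1`. -/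
theorem layeringGraph_children_card_le {V : Type} [Fintype V]
    (G : SimpleGraph V) (hG : G.Connected) (d t : ℕ) (hd : 2 ≤ d)
    (hdeg : ∀ v : V, (G.neighborSet v).ncard ≤ d)
    (htl : treeLength G ≤ t) (s : V)
    (C : {C : Set V // IsLayeringClass G s C}) :
    {D : {C : Set V // IsLayeringClass G s C} |
        (layeringGraph G s).Adj C D ∧
          ∀ u ∈ C.1, ∀ w ∈ D.1, G.dist s w = G.dist s u + 1}.ncard
      ≤ d ^ (3 * t + 2) - 1 := by
  classical
  -- a tree decomposition of length at most t
  have hne : {ℓ | HasTDLength G ℓ}.Nonempty := ⟨Fintype.card V, aux_hasTDLength G hG⟩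
  have hmem : HasTDLength G (treeLength G) := Nat.sInf_mem hne
  obtain ⟨ι, td, hlen0⟩ := hmem
  have hlen : ∀ n, ∀ x ∈ td.bag n, ∀ y ∈ td.bag n, G.dist x y ≤ t :=
    fun n x hx y hy => le_trans (hlen0 n x hx y hy) htl
  obtain ⟨v0, hC⟩ := C.2
  have hv0 : v0 ∈ C.1 := by rw [hC]; exact aux_layerEquiv_refl s v0
  set S := {D : {C : Set V // IsLayeringClass G s C} | (layeringGraph G s).Adj C D ∧
      ∀ u ∈ C.1, ∀ w ∈ D.1, G.dist s w = G.dist s u + 1} with hS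
  -- diameter bound for the class C
  have hCdiam : ∀ u ∈ C.1, G.dist v0 u ≤ 3 * t := by
    intro u hu
    rw [hC] at hu
    obtain ⟨hdist, P, hPpath, hsup⟩ := hu
    exact aux_cluster_diam hG td hlen hdist P hsup
  -- a representative of each child class
  have hrep : ∀ D ∈ S, ∃ w, w ∈ D.1 ∧ w ≠ v0 ∧ G.dist v0 w ≤ 3 * t + 1 := by
    intro D hD
    obtain ⟨⟨hne, u, hu, w, hw, hadj⟩, hlev⟩ := hD
    refine ⟨w, hw, ?_, ?_⟩
    · intro h
      have hcon := hlev v0 hv0 w hw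
      rw [h] at hcon
      omega
    · have h1 : G.dist v0 u ≤ 3 * t := hCdiam u hu
      have h2 : G.dist u w ≤ 1 := by
        have := SimpleGraph.dist_le (SimpleGraph.Walk.cons hadj SimpleGraph.Walk.nil)
        simpa using this
      have h3 : G.dist v0 w ≤ G.dist v0 u + G.dist u w := hG.dist_triangle
      omega
  choose f hf1 hf2 hf3 using hrep
  set F : {C : Set V // IsLayeringClass G s C} → V :=
    fun D => if h : D ∈ S then f D h else v0 with hF
  set B : Set V := {w | w ≠ v0 ∧ G.dist v0 w ≤ 3 * t + 1} with hB
  have hmaps : ∀ D ∈ S, F D ∈ B := by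
    intro D hD
    rw [hF]
    simp only [hD, dif_pos]
    exact ⟨hf2 D hD, hf3 D hD⟩
  have hinj : Set.InjOn F S := by
    intro D1 hD1 D2 hD2 heq
    rw [hF] at heq
    simp only [hD1, hD2, dif_pos] at heq
    have hw1 : f D1 hD1 ∈ D1.1 := hf1 D1 hD1
    have hw2 : f D1 hD1 ∈ D2.1 := heq ▸ hf1 D2 hD2
    obtain ⟨v1, hv1⟩ := D1.2
    obtain ⟨v2, hv2⟩ := D2.2
    apply Subtype.ext
    rw [hv1] at hw1 ⊢
    rw [hv2] at hw2 ⊢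
    rw [aux_class_eq hw1, aux_class_eq hw2]
  have hcard1 : S.ncard ≤ B.ncard :=
    Set.ncard_le_ncard_of_injOn F hmaps hinj (Set.toFinite B)
  -- bound the cardinality of B
  have hcard2 : B.ncard ≤ d ^ (3 * t + 2) - 1 - 1 := by
    have hBf : B = ↑(Finset.univ.filter
        (fun w => w ≠ v0 ∧ G.dist v0 w ≤ 3 * t + 1)) := by
      ext w; simp [hB]
    rw [hBf, Set.ncard_coe_finset]
    have hsub : Finset.univ.filter (fun w => w ≠ v0 ∧ G.dist v0 w ≤ 3 * t + 1) ⊆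
        (Finset.univ.filter (fun w => G.dist v0 w ≤ 3 * t + 1)).erase v0 := by
      intro w hw
      simp only [Finset.mem_filter, Finset.mem_univ, true_and] at hw
      rw [Finset.mem_erase]
      exact ⟨hw.1, by simp [hw.2]⟩
    have h1 := Finset.card_le_card hsub
    have hv0mem : v0 ∈ Finset.univ.filter (fun w => G.dist v0 w ≤ 3 * t + 1) := by
      simp [SimpleGraph.dist_self]
    have h2 := Finset.card_erase_of_mem hv0mem
    have h3 := aux_ball_card G hG hd hdeg v0 (3 * t + 1)
    have h5 : d ^ (3 * t + 1 + 1) = d ^ (3 * t + 2) := rfl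
    omega
  have h4 : 1 ≤ d ^ (3 * t + 2) := Nat.one_le_pow _ _ (by omega)
  omega
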